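/- For every k ∈ X with ‖k‖ ≤ 1, it holds that φ⁻(x⁻_α + k − y⁺_α) ≥ (tρ/25)·(1/16 + v*(k)/ρ) − |e*(k − (ρ/4)v)| − |h*(k − (ρ/4)v)|. -/
import Mathlib

open Filter Topology Set

set_option maxHeartbeats 800000 in
private lemma statement8_aux (ρ t a b c d f A B D : ℝ)
    (hρ0 : 0 < ρ) (hρ1 : ρ < 1 / 4) (ht0 : 0 < t) (ht1 : t < ρ / 16)
    (hA1 : -A ≤ a) (hA0 : 0 ≤ A) (hB1 : b ≤ B) (hB0 : 0 ≤ B)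
    (hD1 : d ≤ D) (hD0 : 0 ≤ D) (hD : D < ρ / 800) (hf1 : -1 ≤ f) (hf2 : f ≤ 1) :
    (1 - ρ / 100) * (a - 2 * t * d) +
      (1 - (1 - ρ / 100)) * (-(b - 2 * t) + 4 * t / ρ * (c - ρ / 4 - 2 * t * f)) ≥
    t * ρ / 25 * (1 / 16 + c / ρ) - A - B := by
  have hρne : ρ ≠ 0 := ne_of_gt hρ0
  have hsimp1 : (1 - (1 - ρ / 100)) * (-(b - 2 * t) + 4 * t / ρ * (c - ρ / 4 - 2 * t * f))
      = -(ρ / 100) * b + t * ρ / 50 + t / 25 * c - t * ρ / 100 - 2 * t ^ 2 / 25 * f := by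
    field_simp; ring
  have hsimp2 : t * ρ / 25 * (1 / 16 + c / ρ) = t * ρ / 400 + t / 25 * c := by
    field_simp; ring
  rw [hsimp1, hsimp2]
  have e1 : -A ≤ (1 - ρ / 100) * a := by
    nlinarith [mul_nonneg hρ0.le hA0,
      mul_nonneg (by linarith : (0:ℝ) ≤ 1 - ρ / 100) (by linarith : (0:ℝ) ≤ a + A)]
  have e2 : -B ≤ -(ρ / 100) * b := by
    nlinarith [mul_nonneg hρ0.le (by linarith : (0:ℝ) ≤ B - b)]
  have e3 : -(t * ρ / 400) ≤ (1 - ρ / 100) * (-(2 * t * d)) := by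
    nlinarith [mul_nonneg (mul_nonneg ht0.le (by linarith : (0:ℝ) ≤ 1 - ρ / 100))
        (by linarith : (0:ℝ) ≤ D - d),
      mul_nonneg (mul_nonneg ht0.le hρ0.le) hD0,
      mul_lt_mul_of_pos_left hD ht0]
  have e4 : -(t * ρ / 200) ≤ -(2 * t ^ 2 / 25 * f) := by
    nlinarith [mul_nonneg (mul_nonneg ht0.le ht0.le) (by linarith : (0:ℝ) ≤ 1 - f),
      mul_lt_mul_of_pos_left ht1 ht0]
  linarith [e1, e2, e3, e4]

theorem statement8 {X : Type*} [NormedAddCommGroup X] [NormedSpace ℝ X] [CompleteSpace X]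
    (ρ t : ℝ) (hρ0 : 0 < ρ) (hρ1 : ρ < 1 / 4) (ht0 : 0 < t) (ht1 : t < ρ / 16)
    (v e h : X) (hv : ‖v‖ = 1) (he : ‖e‖ = 1) (hh : ‖h‖ = 1)
    (vs es hs : X →L[ℝ] ℝ) (hvs : ‖vs‖ = 1) (hes : ‖es‖ = 1) (hhs : ‖hs‖ = 1)
    (hvv : vs v = 1) (hee : es e = 1) (hhh : hs h = 1) (heh : |es h| < ρ / 800)
    (xp xm yp ym : X)
    (hxp : xp = (1 - ρ / 2) • e + t • h) (hxm : xm = (1 - ρ / 2) • e - t • h)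
    (hyp : yp = xp + (ρ / 4) • v) (hym : ym = xm - (ρ / 4) • v)
    (lam : ℝ) (hlam : lam = 1 - ρ / 100)
    (phip phim : X →L[ℝ] ℝ)
    (hphip : phip = lam • es + (1 - lam) • (hs - (4 * t / ρ) • vs))
    (hphim : phim = lam • es + (1 - lam) • (-hs + (4 * t / ρ) • vs))
    (k : X) (hk : ‖k‖ ≤ 1) :
    phim (xm + k - yp) ≥
      t * ρ / 25 * (1 / 16 + vs k / ρ) - |es (k - (ρ / 4) • v)| - |hs (k - (ρ / 4) • v)| := by
  have harg : xm + k - yp = (k - (ρ / 4) • v) - (2 * t) • h := by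
    rw [hxm, hyp, hxp]; module
  obtain ⟨w, hw⟩ : ∃ w : X, w = k - (ρ / 4) • v := ⟨_, rfl⟩
  rw [← hw]
  have hval : phim (xm + k - yp) =
      lam * (es w - 2 * t * es h) +
      (1 - lam) * (-(hs w - 2 * t) + (4 * t / ρ) * (vs w - 2 * t * vs h)) := by
    rw [harg, ← hw, hphim]
    simp [map_sub, map_smul, hhh]
    ring
  have hvw : vs w = vs k - ρ / 4 := by simp [hw, map_sub, map_smul, hvv]
  have hfb : |vs h| ≤ 1 := by
    calc |vs h| ≤ ‖vs‖ * ‖h‖ := vs.le_opNorm h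
    _ = 1 := by rw [hvs, hh]; ring
  rw [hval, hvw, hlam]
  exact statement8_aux ρ t (es w) (hs w) (vs k) (es h) (vs h) |es w| |hs w| |es h|
    hρ0 hρ1 ht0 ht1 (neg_abs_le _) (abs_nonneg _) (le_abs_self _) (abs_nonneg _)
    (le_abs_self _) (abs_nonneg _) heh (by linarith [neg_abs_le (vs h)]) (le_of_abs_le hfb)
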